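/- Let Y be a finite nontrivial minimal obstacle between distinct points y1, y2 in R^d, and let y' be any point in R^d. Then there exists y ∈ Y such that conv({y1, y2, y'}) and conv(Y \ {y}) are disjoint. -/

import Mathlib

open Finset Matrix

private lemma memHull_iff {d : ℕ} {Y : Finset (Fin d → ℝ)} {x : Fin d → ℝ} :
    x ∈ convexHull ℝ (Y : Set (Fin d → ℝ)) ↔
      ∃ w : (Fin d → ℝ) → ℝ, (∀ z ∈ Y, 0 ≤ w z) ∧ ∑ z ∈ Y, w z = 1 ∧ ∑ z ∈ Y, w z • z = x := by
  rw [Finset.convexHull_eq]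
  constructor
  · rintro ⟨w, h0, h1, h2⟩
    refine ⟨w, h0, h1, ?_⟩
    rw [← h2, Finset.centerMass_eq_of_sum_1 _ _ h1]
    rfl
  · rintro ⟨w, h0, h1, h2⟩
    refine ⟨w, h0, h1, ?_⟩
    rw [Finset.centerMass_eq_of_sum_1 _ _ h1]
    exact h2

private lemma erase_or_pos {d : ℕ} {Y : Finset (Fin d → ℝ)} {x : Fin d → ℝ}
    (hx : x ∈ convexHull ℝ (Y : Set (Fin d → ℝ))) :
    (∃ y ∈ Y, x ∈ convexHull ℝ ((Y.erase y : Finset (Fin d → ℝ)) : Set (Fin d → ℝ))) ∨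
      ∃ w : (Fin d → ℝ) → ℝ, (∀ z ∈ Y, 0 < w z) ∧ ∑ z ∈ Y, w z = 1 ∧ ∑ z ∈ Y, w z • z = x := by
  classical
  obtain ⟨w, h0, h1, h2⟩ := memHull_iff.1 hx
  by_cases hz : ∃ y ∈ Y, w y = 0
  · obtain ⟨y, hy, hwy⟩ := hz
    left
    refine ⟨y, hy, memHull_iff.2 ⟨w, fun z hz => h0 z (Finset.mem_of_mem_erase hz), ?_, ?_⟩⟩
    · rw [Finset.sum_erase _ hwy]
      exact h1
    · rw [Finset.sum_erase]
      · exact h2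
      · rw [hwy, zero_smul]
  · right
    push_neg at hz
    exact ⟨w, fun z hzY => lt_of_le_of_ne (h0 z hzY) (Ne.symm (hz z hzY)), h1, h2⟩

private lemma vs_rep {d : ℕ} {Y : Finset (Fin d → ℝ)} (hY : Y.Nonempty) {v : Fin d → ℝ}
    (hv : v ∈ vectorSpan ℝ (Y : Set (Fin d → ℝ))) :
    ∃ c : (Fin d → ℝ) → ℝ, ∑ z ∈ Y, c z = 0 ∧ ∑ z ∈ Y, c z • z = v := by
  classical
  obtain ⟨p, hp⟩ := hY
  rw [vectorSpan_eq_span_vsub_set_right ℝ (Finset.mem_coe.2 hp)] at hv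
  have himg : (fun x => x -ᵥ p) '' (Y : Set (Fin d → ℝ)) = ((Y.image (fun x => x - p) : Finset (Fin d → ℝ)) : Set (Fin d → ℝ)) := by
    rw [Finset.coe_image]
    rfl
  rw [himg] at hv
  obtain ⟨f, -, hf⟩ := Submodule.mem_span_finset.1 hv
  have hinj : Set.InjOn (fun x => x - p) (Y : Set (Fin d → ℝ)) := fun a _ b _ h => by
    simpa using sub_left_injective h
  rw [Finset.sum_image hinj] at hf
  refine ⟨fun z => f (z - p) - (if z = p then ∑ z ∈ Y, f (z - p) else 0), ?_, ?_⟩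
  · rw [Finset.sum_sub_distrib, Finset.sum_ite_eq' Y p]
    simp [hp]
  · have : ∀ z, (f (z - p) - (if z = p then ∑ z ∈ Y, f (z - p) else 0)) • z
        = f (z - p) • z - (if z = p then (∑ z ∈ Y, f (z - p)) • z else 0) := by
      intro z
      by_cases h : z = p <;> simp [h, sub_smul]
    simp_rw [this]
    rw [Finset.sum_sub_distrib, Finset.sum_ite_eq' Y p]
    simp only [hp, if_pos]
    have hexp : ∑ z ∈ Y, f (z - p) • (z - p)
        = ∑ z ∈ Y, f (z - p) • z - (∑ z ∈ Y, f (z - p)) • p := by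
      rw [Finset.sum_smul]
      rw [← Finset.sum_sub_distrib]
      congr 1
      ext z
      rw [smul_sub]
    rw [← hf, hexp]

private lemma diff_mem_vs {d : ℕ} {Y : Finset (Fin d → ℝ)} {a b : Fin d → ℝ}
    (ha : a ∈ convexHull ℝ (Y : Set (Fin d → ℝ)))
    (hb : b ∈ convexHull ℝ (Y : Set (Fin d → ℝ))) :
    a - b ∈ vectorSpan ℝ (Y : Set (Fin d → ℝ)) := by
  have ha' := convexHull_subset_affineSpan (Y : Set (Fin d → ℝ)) ha
  have hb' := convexHull_subset_affineSpan (Y : Set (Fin d → ℝ)) hb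
  have h := AffineSubspace.vsub_mem_direction ha' hb'
  rwa [direction_affineSpan] at h

private lemma pair_mem_iff {d : ℕ} {y1 y2 x : Fin d → ℝ} :
    x ∈ convexHull ℝ ({y1, y2} : Set (Fin d → ℝ)) ↔
      ∃ t : ℝ, t ∈ Set.Icc (0:ℝ) 1 ∧ x = y1 + t • (y2 - y1) := by
  rw [convexHull_pair, segment_eq_image']
  constructor
  · rintro ⟨t, ht, rfl⟩
    exact ⟨t, ht, rfl⟩
  · rintro ⟨t, ht, rfl⟩
    exact ⟨t, ht, rfl⟩

private lemma tri_mem {d : ℕ} {y1 y2 y' x : Fin d → ℝ}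
    (hx : x ∈ convexHull ℝ ({y1, y2, y'} : Set (Fin d → ℝ))) :
    ∃ t c : ℝ, 0 ≤ c ∧ (c = 0 → x ∈ convexHull ℝ ({y1, y2} : Set (Fin d → ℝ))) ∧
      x - y1 = t • (y2 - y1) + c • (y' - y1) := by
  have hset : ({y1, y2, y'} : Set (Fin d → ℝ)) = insert y' {y1, y2} := by
    rw [Set.pair_comm y2 y', Set.insert_comm]
  rw [hset, convexHull_insert ⟨y1, by simp⟩] at hx
  rw [mem_convexJoin] at hx
  obtain ⟨yy, hyy, z, hz, hxz⟩ := hx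
  rw [Set.mem_singleton_iff] at hyy
  subst hyy
  obtain ⟨a, b, ha, hb, hab, hxe⟩ := hxz
  have hz' := hz
  rw [convexHull_pair, segment_eq_image'] at hz'
  obtain ⟨θ, hθ, hze⟩ := hz'
  refine ⟨b * θ, a, ha, ?_, ?_⟩
  · intro h
    have hb1 : b = 1 := by linarith
    have : x = z := by rw [← hxe, h, hb1]; simp
    rw [this]
    exact hz
  · have ha' : a = 1 - b := by linarith
    rw [← hxe, ← hze, ha']
    module

private lemma nudge {d : ℕ} {Y : Finset (Fin d → ℝ)} {x v : Fin d → ℝ} (hY : Y.Nonempty)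
    (hw : ∃ w : (Fin d → ℝ) → ℝ, (∀ z ∈ Y, 0 < w z) ∧ ∑ z ∈ Y, w z = 1 ∧ ∑ z ∈ Y, w z • z = x)
    (hc : ∃ c : (Fin d → ℝ) → ℝ, ∑ z ∈ Y, c z = 0 ∧ ∑ z ∈ Y, c z • z = v) :
    ∃ ε > 0, ∀ δ : ℝ, 0 ≤ δ → δ ≤ ε → x - δ • v ∈ convexHull ℝ (Y : Set (Fin d → ℝ)) := by
  obtain ⟨w, hw0, hw1, hwx⟩ := hw
  obtain ⟨c, hc0, hcv⟩ := hc
  set μ := Y.inf' hY w with hμdef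
  set C := Y.sup' hY (fun z => |c z|) + 1 with hCdef
  have hμ : 0 < μ := by
    rw [hμdef, Finset.lt_inf'_iff]
    exact hw0
  have hC : 0 < C := by
    obtain ⟨z0, hz0⟩ := id hY
    have h1 : |c z0| ≤ Y.sup' hY (fun z => |c z|) := Finset.le_sup' (fun z => |c z|) hz0
    have := abs_nonneg (c z0)
    rw [hCdef]; linarith
  refine ⟨μ / C, div_pos hμ hC, fun δ h0 h1 => memHull_iff.2 ⟨fun z => w z - δ * c z, ?_, ?_, ?_⟩⟩
  · intro z hz
    show (0:ℝ) ≤ w z - δ * c z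
    have hwz : μ ≤ w z := Finset.inf'_le _ hz
    have hcz : |c z| ≤ C := by
      have := Finset.le_sup' (fun z => |c z|) hz
      rw [hCdef]; linarith
    have h2 : δ * c z ≤ δ * |c z| := by
      apply mul_le_mul_of_nonneg_left (le_abs_self _) h0
    have h3 : δ * |c z| ≤ (μ / C) * C := by
      apply mul_le_mul h1 hcz (abs_nonneg _) (le_of_lt (div_pos hμ hC))
    rw [div_mul_cancel₀ _ (ne_of_gt hC)] at h3
    linarith
  · rw [Finset.sum_sub_distrib, hw1, ← Finset.mul_sum, hc0, mul_zero, sub_zero]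
  · have : ∀ z, (w z - δ * c z) • z = w z • z - δ • (c z • z) := by
      intro z
      rw [sub_smul, mul_smul]
    simp_rw [this]
    rw [Finset.sum_sub_distrib, hwx, ← Finset.smul_sum, hcv]

private lemma not_mem_vs {d : ℕ} {y1 y2 : Fin d → ℝ} {Y : Finset (Fin d → ℝ)}
    (hobs : (convexHull ℝ (Y : Set (Fin d → ℝ)) ∩ convexHull ℝ ({y1, y2} : Set (Fin d → ℝ))).Nonempty)
    (h1 : y1 ∉ convexHull ℝ (Y : Set (Fin d → ℝ)))
    (hmin : ∀ y ∈ Y,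
      convexHull ℝ ((Y.erase y : Finset (Fin d → ℝ)) : Set (Fin d → ℝ)) ∩
        convexHull ℝ ({y1, y2} : Set (Fin d → ℝ)) = ∅) :
    y2 - y1 ∉ vectorSpan ℝ (Y : Set (Fin d → ℝ)) := by
  intro hv
  classical
  obtain ⟨q, hqY, hqP⟩ := hobs
  have hYne : Y.Nonempty := by
    rw [← Finset.coe_nonempty]
    exact convexHull_nonempty_iff.1 ⟨q, hqY⟩
  set S : Set ℝ :=
    {t | t ∈ Set.Icc (0:ℝ) 1 ∧ y1 + t • (y2 - y1) ∈ convexHull ℝ (Y : Set (Fin d → ℝ))} with hSdef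
  obtain ⟨tq, htq, hqe⟩ := pair_mem_iff.1 hqP
  have hSne : S.Nonempty := ⟨tq, htq, by rw [← hqe]; exact hqY⟩
  have hSbd : BddBelow S := ⟨0, fun t ht => ht.1.1⟩
  have hScl : IsClosed S := by
    have hc1 : IsClosed (Set.Icc (0:ℝ) 1) := isClosed_Icc
    have hc2 : IsClosed {t : ℝ | y1 + t • (y2 - y1) ∈ convexHull ℝ (Y : Set (Fin d → ℝ))} := by
      apply IsClosed.preimage (f := fun t : ℝ => y1 + t • (y2 - y1))
      · exact continuous_const.add (continuous_id.smul continuous_const)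
      · exact (Y.finite_toSet.isCompact_convexHull ℝ).isClosed
    exact hc1.inter hc2
  set t0 := sInf S with ht0def
  have ht0 : t0 ∈ S := hScl.csInf_mem hSne hSbd
  set x0 := y1 + t0 • (y2 - y1) with hx0def
  have hx0Y : x0 ∈ convexHull ℝ (Y : Set (Fin d → ℝ)) := ht0.2
  have hx0P : x0 ∈ convexHull ℝ ({y1, y2} : Set (Fin d → ℝ)) := pair_mem_iff.2 ⟨t0, ht0.1, rfl⟩
  have hpos : ∃ w : (Fin d → ℝ) → ℝ,
      (∀ z ∈ Y, 0 < w z) ∧ ∑ z ∈ Y, w z = 1 ∧ ∑ z ∈ Y, w z • z = x0 := by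
    rcases erase_or_pos hx0Y with ⟨y, hy, hmem⟩ | h
    · exfalso
      have : x0 ∈ (∅ : Set (Fin d → ℝ)) := (hmin y hy) ▸ Set.mem_inter hmem hx0P
      exact this
    · exact h
  have ht0pos : 0 < t0 := by
    rcases lt_or_eq_of_le ht0.1.1 with h | h
    · exact h
    · exfalso
      apply h1
      have : x0 = y1 := by rw [hx0def, ← h, zero_smul, add_zero]
      rw [← this]
      exact hx0Y
  obtain ⟨ε, hε, hmem⟩ := nudge hYne hpos (vs_rep hYne hv)
  set δ := min ε (t0 / 2) with hδdef
  have hδpos : 0 < δ := lt_min hε (by linarith)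
  have hδle : δ ≤ t0 / 2 := min_le_right _ _
  have hS' : t0 - δ ∈ S := by
    constructor
    · constructor
      · linarith
      · have := ht0.1.2; linarith
    · have h := hmem δ (le_of_lt hδpos) (min_le_left _ _)
      have heq : x0 - δ • (y2 - y1) = y1 + (t0 - δ) • (y2 - y1) := by
        rw [hx0def, sub_smul]; abel
      rwa [heq] at h
  have : t0 ≤ t0 - δ := csInf_le hSbd hS'
  linarith



/-- Given a nontrivial minimal obstacle `Y` between `y1` and `y2` and any
point `y'`, some point of `Y` can be removed so that the triangle
`conv {y1, y2, y'}` is disjoint from the hull of the rest. -/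
theorem stmt_8 (d : ℕ) (y1 y2 y' : Fin d → ℝ) (hne : y1 ≠ y2) (Y : Finset (Fin d → ℝ))
    (hobs : (convexHull ℝ (Y : Set (Fin d → ℝ)) ∩ convexHull ℝ ({y1, y2} : Set (Fin d → ℝ))).Nonempty)
    (h1 : y1 ∉ convexHull ℝ (Y : Set (Fin d → ℝ)))
    (h2 : y2 ∉ convexHull ℝ (Y : Set (Fin d → ℝ)))
    (hmin : ∀ y ∈ Y,
      convexHull ℝ ((Y.erase y : Finset (Fin d → ℝ)) : Set (Fin d → ℝ)) ∩
        convexHull ℝ ({y1, y2} : Set (Fin d → ℝ)) = ∅) :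
    ∃ y ∈ Y,
      convexHull ℝ ({y1, y2, y'} : Set (Fin d → ℝ)) ∩
        convexHull ℝ ((Y.erase y : Finset (Fin d → ℝ)) : Set (Fin d → ℝ)) = ∅ := by
  classical
  obtain ⟨q, hqY, hqP⟩ := hobs
  have hYne : Y.Nonempty := by
    rw [← Finset.coe_nonempty]
    exact convexHull_nonempty_iff.1 ⟨q, hqY⟩
  have hV : y2 - y1 ∉ vectorSpan ℝ (Y : Set (Fin d → ℝ)) := not_mem_vs ⟨q, hqY, hqP⟩ h1 hmin
  have hErSub : ∀ y, convexHull ℝ ((Y.erase y : Finset (Fin d → ℝ)) : Set (Fin d → ℝ)) ⊆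
      convexHull ℝ (Y : Set (Fin d → ℝ)) :=
    fun y => convexHull_mono (Finset.coe_subset.2 (Finset.erase_subset _ _))
  have hP : ∀ x, x ∈ convexHull ℝ ({y1, y2} : Set (Fin d → ℝ)) → ∀ y ∈ Y,
      x ∉ convexHull ℝ ((Y.erase y : Finset (Fin d → ℝ)) : Set (Fin d → ℝ)) := by
    intro x hx y hy hmem
    have : x ∈ (∅ : Set (Fin d → ℝ)) := (hmin y hy) ▸ Set.mem_inter hmem hx
    exact this
  obtain ⟨tq, htq, hqe⟩ := pair_mem_iff.1 hqP
  have hqmy : q - y1 = tq • (y2 - y1) := by rw [hqe]; abel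
  by_cases hdeg : (y' - y1) ∈ Submodule.span ℝ {y2 - y1}
  · -- degenerate case : y' on the line through y1 y2
    obtain ⟨y0, hy0⟩ := hYne
    refine ⟨y0, hy0, Set.eq_empty_iff_forall_notMem.2 ?_⟩
    rintro x ⟨hxT, hxE⟩
    obtain ⟨t, c, hc0, -, hxe⟩ := tri_mem hxT
    obtain ⟨r, hr⟩ := Submodule.mem_span_singleton.1 hdeg
    have hr' : y' - y1 = r • (y2 - y1) := hr.symm
    have hxq : x - q = (t + c * r - tq) • (y2 - y1) := by
      have hxy : x - q = (x - y1) - (q - y1) := by abel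
      rw [hxy, hxe, hr', hqmy]; module
    have hmemvs : x - q ∈ vectorSpan ℝ (Y : Set (Fin d → ℝ)) := diff_mem_vs (hErSub y0 hxE) hqY
    by_cases hco : t + c * r - tq = 0
    · rw [hco, zero_smul] at hxq
      have hxqe : x = q := sub_eq_zero.1 hxq
      exact hP q hqP y0 hy0 (hxqe ▸ hxE)
    · apply hV
      rw [hxq] at hmemvs
      have h := Submodule.smul_mem _ (t + c * r - tq)⁻¹ hmemvs
      rwa [smul_smul, inv_mul_cancel₀ hco, one_smul] at h
  · -- nondegenerate case
    set W : Fin d → ℝ := (y' - y1) - (((y' - y1) ⬝ᵥ (y2 - y1)) / ((y2 - y1) ⬝ᵥ (y2 - y1))) • (y2 - y1) with hWdef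
    have hv0ne : y2 - y1 ≠ 0 := sub_ne_zero.2 (Ne.symm hne)
    have hv0dotne : (y2 - y1) ⬝ᵥ (y2 - y1) ≠ 0 := fun h => hv0ne (dotProduct_self_eq_zero.1 h)
    have hWv0 : W ⬝ᵥ (y2 - y1) = 0 := by
      rw [hWdef, sub_dotProduct, smul_dotProduct, smul_eq_mul,
        div_mul_cancel₀ _ hv0dotne, sub_self]
    have hv0W : (y2 - y1) ⬝ᵥ W = 0 := by rw [dotProduct_comm]; exact hWv0
    have hWne : W ≠ 0 := by
      intro h
      apply hdeg
      rw [Submodule.mem_span_singleton]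
      refine ⟨((y' - y1) ⬝ᵥ (y2 - y1)) / ((y2 - y1) ⬝ᵥ (y2 - y1)), ?_⟩
      have := sub_eq_zero.1 (hWdef ▸ h)
      exact this.symm
    have hWW : 0 < W ⬝ᵥ W := by
      rcases lt_or_eq_of_le (Finset.sum_nonneg fun i _ => mul_self_nonneg (W i)) with h | h
      · exact h
      · exact absurd (dotProduct_self_eq_zero.1 h.symm) hWne
    have hWu : 0 < (y' - y1) ⬝ᵥ W := by
      have hcalc : W ⬝ᵥ W = (y' - y1) ⬝ᵥ W
          - (((y' - y1) ⬝ᵥ (y2 - y1)) / ((y2 - y1) ⬝ᵥ (y2 - y1))) * ((y2 - y1) ⬝ᵥ W) := by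
        rw [hWdef, sub_dotProduct, smul_dotProduct, smul_eq_mul]
      rw [hv0W, mul_zero, sub_zero] at hcalc
      rw [← hcalc]
      exact hWW
    have hψpair : ∀ x, x ∈ convexHull ℝ ({y1, y2} : Set (Fin d → ℝ)) → (x - y1) ⬝ᵥ W = 0 := by
      intro x hx
      obtain ⟨t, -, rfl⟩ := pair_mem_iff.1 hx
      rw [add_sub_cancel_left, smul_dotProduct, smul_eq_mul, hv0W, mul_zero]
    have hψtri : ∀ x, x ∈ convexHull ℝ ({y1, y2, y'} : Set (Fin d → ℝ)) →
        0 ≤ (x - y1) ⬝ᵥ W ∧ ((x - y1) ⬝ᵥ W = 0 → x ∈ convexHull ℝ ({y1, y2} : Set (Fin d → ℝ))) := by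
      intro x hx
      obtain ⟨t, c, hc0, hcz, hxe⟩ := tri_mem hx
      have hval : (x - y1) ⬝ᵥ W = c * ((y' - y1) ⬝ᵥ W) := by
        rw [hxe, add_dotProduct, smul_dotProduct, smul_dotProduct,
          smul_eq_mul, smul_eq_mul, hv0W, mul_zero, zero_add]
      constructor
      · rw [hval]; positivity
      · intro h
        rw [hval] at h
        rcases mul_eq_zero.1 h with h' | h'
        · exact hcz h'
        · exact absurd h' (ne_of_gt hWu)
    by_contra hcon
    push_neg at hcon
    have hp : ∀ y ∈ Y, ∃ p, p ∈ convexHull ℝ ({y1, y2, y'} : Set (Fin d → ℝ)) ∧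
        p ∈ convexHull ℝ ((Y.erase y : Finset (Fin d → ℝ)) : Set (Fin d → ℝ)) := by
      intro y hy
      obtain ⟨p, hpm⟩ := hcon y hy
      exact ⟨p, hpm.1, hpm.2⟩
    have hψp : ∀ y ∈ Y, ∀ p, p ∈ convexHull ℝ ({y1, y2, y'} : Set (Fin d → ℝ)) →
        p ∈ convexHull ℝ ((Y.erase y : Finset (Fin d → ℝ)) : Set (Fin d → ℝ)) →
        0 < (p - y1) ⬝ᵥ W := by
      intro y hy p hpT hpE
      rcases lt_or_eq_of_le (hψtri p hpT).1 with h | h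
      · exact h
      · exact absurd hpE (hP p ((hψtri p hpT).2 h.symm) y hy)
    obtain ⟨ya, hya⟩ := id hYne
    obtain ⟨pa, hpaT, hpaE⟩ := hp ya hya
    have hpaY : pa ∈ convexHull ℝ (Y : Set (Fin d → ℝ)) := hErSub ya hpaE
    set v : Fin d → ℝ := pa - q with hvdef
    have hψq : (q - y1) ⬝ᵥ W = 0 := hψpair q hqP
    have hvW : 0 < v ⬝ᵥ W := by
      have hsplit : v = (pa - y1) - (q - y1) := by rw [hvdef]; abel
      rw [hsplit, sub_dotProduct, hψq, sub_zero]
      exact hψp ya hya pa hpaT hpaE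
    have hvne : v ≠ 0 := by
      intro h
      rw [h] at hvW
      simp [zero_dotProduct] at hvW
    -- the exit point
    set S : Set ℝ := {τ | 0 ≤ τ ∧ q - τ • v ∈ convexHull ℝ (Y : Set (Fin d → ℝ))} with hSdef
    have hS0 : (0:ℝ) ∈ S := ⟨le_refl 0, by simpa using hqY⟩
    have hSne : S.Nonempty := ⟨0, hS0⟩
    have hScl : IsClosed S := by
      have hc1 : IsClosed {τ : ℝ | 0 ≤ τ} := isClosed_Ici
      have hc2 : IsClosed {τ : ℝ | q - τ • v ∈ convexHull ℝ (Y : Set (Fin d → ℝ))} := by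
        apply IsClosed.preimage (f := fun τ : ℝ => q - τ • v)
        · exact continuous_const.sub (continuous_id.smul continuous_const)
        · exact (Y.finite_toSet.isCompact_convexHull ℝ).isClosed
      exact hc1.inter hc2
    have hSbd : BddAbove S := by
      obtain ⟨R, hR⟩ := (Y.finite_toSet.isCompact_convexHull ℝ).isBounded.subset_closedBall q
      refine ⟨R / ‖v‖, fun τ hτ => ?_⟩
      have h := hR hτ.2
      rw [Metric.mem_closedBall, dist_eq_norm] at h
      have he : q - τ • v - q = -(τ • v) := by abel
      rw [he, norm_neg, norm_smul, Real.norm_eq_abs, abs_of_nonneg hτ.1] at h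
      rw [le_div_iff₀ (norm_pos_iff.2 hvne)]
      exact h
    set τs := sSup S with hτsdef
    have hτs : τs ∈ S := hScl.csSup_mem hSne hSbd
    set xs : Fin d → ℝ := q - τs • v with hxsdef
    have hxsY : xs ∈ convexHull ℝ (Y : Set (Fin d → ℝ)) := hτs.2
    have hxsE : ∃ y0 ∈ Y, xs ∈ convexHull ℝ ((Y.erase y0 : Finset (Fin d → ℝ)) : Set (Fin d → ℝ)) := by
      rcases erase_or_pos hxsY with h | hpos
      · exact h
      · exfalso
        obtain ⟨ε, hε, hmem⟩ := nudge hYne hpos (vs_rep hYne (diff_mem_vs hpaY hqY))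
        have hτ' : τs + ε ∈ S := by
          refine ⟨by linarith [hτs.1], ?_⟩
          have hm := hmem ε (le_of_lt hε) (le_refl ε)
          have heq : xs - ε • v = q - (τs + ε) • v := by
            rw [hxsdef, add_smul]; abel
          rwa [heq] at hm
        have := le_csSup hSbd hτ'
        linarith
    obtain ⟨y0, hy0, hxsE0⟩ := hxsE
    obtain ⟨pb, hpbT, hpbE⟩ := hp y0 hy0
    -- expansions in terms of (y2 - y1) and (y' - y1)
    obtain ⟨ta, ca, hca0, -, hae⟩ := tri_mem hpaT
    obtain ⟨tb, cb, hcb0, -, hbe⟩ := tri_mem hpbT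
    have hveq : v = (ta - tq) • (y2 - y1) + ca • (y' - y1) := by
      have hsplit : v = (pa - y1) - (q - y1) := by rw [hvdef]; abel
      rw [hsplit, hae, hqmy]; module
    have hbq : pb - q = (tb - tq) • (y2 - y1) + cb • (y' - y1) := by
      have hsplit : pb - q = (pb - y1) - (q - y1) := by abel
      rw [hsplit, hbe, hqmy]; module
    have hca : 0 < ca := by
      have hψa : 0 < (pa - y1) ⬝ᵥ W := hψp ya hya pa hpaT hpaE
      have hval : (pa - y1) ⬝ᵥ W = ca * ((y' - y1) ⬝ᵥ W) := by
        rw [hae, add_dotProduct, smul_dotProduct, smul_dotProduct,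
          smul_eq_mul, smul_eq_mul, hv0W, mul_zero, zero_add]
      rw [hval] at hψa
      rcases mul_pos_iff.1 hψa with ⟨h', -⟩ | ⟨-, h'⟩
      · exact h'
      · linarith
    -- collinearity
    have hcane : ca ≠ 0 := ne_of_gt hca
    have hcomb : pb - q = (tb - tq - cb * (ta - tq) / ca) • (y2 - y1) + (cb / ca) • v := by
      rw [hbq, hveq]
      match_scalars <;> (field_simp; try ring)
    have hcol : ∃ s : ℝ, pb - q = s • v := by
      by_cases hK : tb - tq - cb * (ta - tq) / ca = 0
      · refine ⟨cb / ca, ?_⟩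
        rw [hcomb, hK, zero_smul, zero_add]
      · exfalso
        apply hV
        have hcomb' : (tb - tq - cb * (ta - tq) / ca) • (y2 - y1) = (pb - q) - (cb / ca) • v := by
          rw [hcomb]; abel
        have hmem : (pb - q) - (cb / ca) • v ∈ vectorSpan ℝ (Y : Set (Fin d → ℝ)) :=
          Submodule.sub_mem _ (diff_mem_vs (hErSub y0 hpbE) hqY)
            (Submodule.smul_mem _ _ (diff_mem_vs hpaY hqY))
        rw [← hcomb'] at hmem
        have h := Submodule.smul_mem _ (tb - tq - cb * (ta - tq) / ca)⁻¹ hmem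
        rwa [smul_smul, inv_mul_cancel₀ hK, one_smul] at h
    obtain ⟨s, hs⟩ := hcol
    have hpb_eq : pb = q + s • v := by rw [← hs]; abel
    have hspos : 0 < s := by
      have hψpb : 0 < (pb - y1) ⬝ᵥ W := hψp y0 hy0 pb hpbT hpbE
      have hval : (pb - y1) ⬝ᵥ W = s * (v ⬝ᵥ W) := by
        have he : pb - y1 = (q - y1) + s • v := by rw [hpb_eq]; abel
        rw [he, add_dotProduct, hψq, zero_add, smul_dotProduct, smul_eq_mul]
      rw [hval] at hψpb
      rcases mul_pos_iff.1 hψpb with ⟨h', -⟩ | ⟨-, h'⟩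
      · exact h'
      · linarith
    have hτs0 : 0 ≤ τs := hτs.1
    have hstne : s + τs ≠ 0 := by positivity
    have hq_comb : q = (s / (s + τs)) • xs + (τs / (s + τs)) • pb := by
      rw [hxsdef, hpb_eq]
      match_scalars <;> (field_simp; try ring)
    have hqE : q ∈ convexHull ℝ ((Y.erase y0 : Finset (Fin d → ℝ)) : Set (Fin d → ℝ)) := by
      rw [hq_comb]
      exact (convex_convexHull ℝ _) hxsE0 hpbE (by positivity) (by positivity) (by field_simp)
    exact hP q hqP y0 hy0 hqE
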